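/- Fix b > 0. For any finite multiset z of points in ℝ, there is a unique decomposition z = z₁ + ... + z_m such that each z_i is well contained in its box B_{z_i} (every consecutive sub-multiset's box is contained in B_{z_i}), the boxes B_{z_i} are pairwise disjoint, and they are ordered B_{z₁} < B_{z₂} < ... < B_{z_m}. -/

import Mathlib

/-- The mean of the points of `x` indexed by `S`. -/
noncomputable def bmean {n : ℕ} (x : Fin n → ℝ) (S : Finset (Fin n)) : ℝ :=
  (∑ i ∈ S, x i) / S.card

/-- The box of a sub-collection: the closed interval of radius `|S| * b` around its mean. -/
noncomputable def bbox {n : ℕ} (b : ℝ) (x : Fin n → ℝ) (S : Finset (Fin n)) : Set ℝ :=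
  Set.Icc (bmean x S - S.card * b) (bmean x S + S.card * b)

/-- `D` is a box decomposition of the sorted tuple `x`: its blocks are nonempty, partition
the index set, are consecutive, well contained in their boxes, and the boxes are pairwise
disjoint and ordered compatibly with the indices. -/
def IsBoxDecomp {n : ℕ} (b : ℝ) (x : Fin n → ℝ) (D : Finset (Finset (Fin n))) : Prop :=
  (∀ S ∈ D, S.Nonempty) ∧
  (∀ a : Fin n, ∃! S : Finset (Fin n), S ∈ D ∧ a ∈ S) ∧
  (∀ S ∈ D, ∀ a ∈ S, ∀ c ∈ S, ∀ t : Fin n, a ≤ t → t ≤ c → t ∈ S) ∧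
  (∀ S ∈ D, ∀ a ∈ S, ∀ c ∈ S, a ≤ c → bbox b x (Finset.Icc a c) ⊆ bbox b x S) ∧
  (∀ S ∈ D, ∀ T ∈ D, S ≠ T → bbox b x S ∩ bbox b x T = ∅) ∧
  (∀ S ∈ D, ∀ T ∈ D, (∀ a ∈ S, ∀ c ∈ T, a < c) →
    ∀ u ∈ bbox b x S, ∀ v ∈ bbox b x T, u < v)

section BoxAux

def Consec {n : ℕ} (S : Finset (Fin n)) : Prop :=
  ∀ a ∈ S, ∀ c ∈ S, ∀ t : Fin n, a ≤ t → t ≤ c → t ∈ S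

def WellCont {n : ℕ} (b : ℝ) (x : Fin n → ℝ) (S : Finset (Fin n)) : Prop :=
  ∀ a ∈ S, ∀ c ∈ S, a ≤ c → bbox b x (Finset.Icc a c) ⊆ bbox b x S

variable {n : ℕ} {b : ℝ} {x : Fin n → ℝ}


lemma upper_merge (b mS mT mIA mIB mI mU iA iB s t : ℝ)
    (hb : 0 < b) (hiA : 0 < iA) (hiB : 0 < iB) (hs : iA ≤ s) (ht : iB ≤ t)
    (hI : mI * (iA + iB) = iA * mIA + iB * mIB)
    (hU : mU * (s + t) = s * mS + t * mT)
    (hA : mIA + iA * b ≤ mS + s * b)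
    (hB : mIB + iB * b ≤ mT + t * b)
    (hov : mT - t * b ≤ mS + s * b)
    (h2 : mIA ≤ mIB) :
    mI + (iA + iB) * b ≤ mU + (s + t) * b := by
  have d1 : 0 < iA + iB := by linarith
  have d2 : 0 < iA + t := by linarith
  have d3 : 0 < s + t := by linarith
  have htpos : 0 < t := hiB.trans_le ht
  set W : ℝ := (iA * mIA + t * mT) / (iA + t) with hWdef
  have hW : W * (iA + t) = iA * mIA + t * mT := by
    rw [hWdef, div_mul_cancel₀ _ d2.ne']
  have k1 : (W + (iA + t) * b - (mI + (iA + iB) * b)) * ((iA + iB) * (iA + t)) =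
      iA * (t - iB) * (mIB - mIA) + t * (iA + iB) * ((mT + t * b) - (mIB + iB * b))
        + (t - iB) * (iA + iB) * iA * b := by
    linear_combination (iA + iB) * hW - (iA + t) * hI
  have k2 : (mU + (s + t) * b - (W + (iA + t) * b)) * ((iA + t) * (s + t)) =
      t * (s - iA) * ((mS + (s + t) * b) - mT) + iA * (s + t) * ((mS + s * b) - (mIA + iA * b)) := by
    linear_combination (iA + t) * hU - (s + t) * hW
  have r1 : (0:ℝ) ≤ (W + (iA + t) * b - (mI + (iA + iB) * b)) * ((iA + iB) * (iA + t)) := by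
    rw [k1]
    have := mul_nonneg (mul_nonneg hiA.le (sub_nonneg.2 ht)) (sub_nonneg.2 h2)
    have := mul_nonneg (mul_nonneg htpos.le d1.le) (sub_nonneg.2 hB)
    have := mul_nonneg (mul_nonneg (mul_nonneg (sub_nonneg.2 ht) d1.le) hiA.le) hb.le
    linarith
  have r2 : (0:ℝ) ≤ (mU + (s + t) * b - (W + (iA + t) * b)) * ((iA + t) * (s + t)) := by
    rw [k2]
    have := mul_nonneg (mul_nonneg htpos.le (sub_nonneg.2 hs)) (by linarith : (0:ℝ) ≤ mS + (s + t) * b - mT)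
    have := mul_nonneg (mul_nonneg hiA.le d3.le) (sub_nonneg.2 hA)
    linarith
  have s1 := (mul_nonneg_iff_of_pos_right (mul_pos d1 d2)).mp r1
  have s2 := (mul_nonneg_iff_of_pos_right (mul_pos d2 d3)).mp r2
  linarith

lemma lower_merge (b mS mT mIA mIB mI mU iA iB s t : ℝ)
    (hb : 0 < b) (hiA : 0 < iA) (hiB : 0 < iB) (hs : iA ≤ s) (ht : iB ≤ t)
    (hI : mI * (iA + iB) = iA * mIA + iB * mIB)
    (hU : mU * (s + t) = s * mS + t * mT)
    (hA : mS - s * b ≤ mIA - iA * b)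
    (hB : mT - t * b ≤ mIB - iB * b)
    (hov : mT - t * b ≤ mS + s * b)
    (h2 : mIA ≤ mIB) :
    mU - (s + t) * b ≤ mI - (iA + iB) * b := by
  have := upper_merge b (-mT) (-mS) (-mIB) (-mIA) (-mI) (-mU) iB iA t s hb hiB hiA ht hs
    (by linarith [hI]) (by linarith [hU]) (by linarith) (by linarith) (by linarith) (by linarith)
  linarith

lemma card_posR {S : Finset (Fin n)} (hS : S.Nonempty) : (0:ℝ) < S.card := by
  exact_mod_cast Finset.card_pos.2 hS

lemma bmean_card {S : Finset (Fin n)} (hS : S.Nonempty) :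
    bmean x S * S.card = ∑ i ∈ S, x i := by
  rw [bmean]; field_simp

lemma bmean_le_bmean {A B : Finset (Fin n)} (hA : A.Nonempty) (hB : B.Nonempty)
    (h : ∀ i ∈ A, ∀ j ∈ B, x i ≤ x j) : bmean x A ≤ bmean x B := by
  rw [bmean, bmean, div_le_div_iff₀ (card_posR hA) (card_posR hB)]
  have key : ∀ j ∈ B, (∑ i ∈ A, x i) ≤ A.card * x j := by
    intro j hj
    calc (∑ i ∈ A, x i) ≤ ∑ i ∈ A, x j := Finset.sum_le_sum (fun i hi => h i hi j hj)
    _ = A.card * x j := by rw [Finset.sum_const, nsmul_eq_mul]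
  calc (∑ i ∈ A, x i) * B.card = ∑ j ∈ B, (∑ i ∈ A, x i) := by
        rw [Finset.sum_const, nsmul_eq_mul]; ring
  _ ≤ ∑ j ∈ B, A.card * x j := Finset.sum_le_sum key
  _ = (∑ j ∈ B, x j) * A.card := by rw [← Finset.mul_sum]; ring

lemma bmean_whole_le {S A : Finset (Fin n)} (hA : A.Nonempty) (hsub : A ⊆ S)
    (h : ∀ i ∈ S \ A, ∀ j ∈ A, x i ≤ x j) : bmean x S ≤ bmean x A := by
  rcases (S \ A).eq_empty_or_nonempty with he | hP
  · have : S = A := Finset.Subset.antisymm (by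
      intro i hi
      by_contra hiA
      exact absurd (Finset.mem_sdiff.2 ⟨hi, hiA⟩) (by simp [he])) hsub
    rw [this]
  · have hmm := bmean_le_bmean hP hA h
    have hsum : (∑ i ∈ S \ A, x i) + ∑ i ∈ A, x i = ∑ i ∈ S, x i := Finset.sum_sdiff hsub
    have hcard : ((S \ A).card : ℝ) + A.card = S.card := by
      exact_mod_cast Finset.card_sdiff_add_card_eq_card hsub
    have hS : S.Nonempty := hP.mono (Finset.sdiff_subset)
    rw [bmean, bmean, div_le_div_iff₀ (card_posR hS) (card_posR hA)]
    rw [bmean, bmean, div_le_div_iff₀ (card_posR hP) (card_posR hA)] at hmm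
    have e1 : (∑ i ∈ S, x i) * (A.card:ℝ) =
        (∑ i ∈ S \ A, x i) * A.card + (∑ i ∈ A, x i) * A.card := by rw [← hsum]; ring
    have e2 : (∑ i ∈ A, x i) * (S.card:ℝ) =
        (∑ i ∈ A, x i) * (S \ A).card + (∑ i ∈ A, x i) * A.card := by rw [← hcard]; ring
    linarith
  
lemma bmean_le_whole {S A : Finset (Fin n)} (hA : A.Nonempty) (hsub : A ⊆ S)
    (h : ∀ i ∈ S \ A, ∀ j ∈ A, x j ≤ x i) : bmean x A ≤ bmean x S := by
  rcases (S \ A).eq_empty_or_nonempty with he | hP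
  · have : S = A := Finset.Subset.antisymm (by
      intro i hi
      by_contra hiA
      exact absurd (Finset.mem_sdiff.2 ⟨hi, hiA⟩) (by simp [he])) hsub
    rw [this]
  · have hmm := bmean_le_bmean hA hP (fun i hi j hj => h j hj i hi)
    have hsum : (∑ i ∈ S \ A, x i) + ∑ i ∈ A, x i = ∑ i ∈ S, x i := Finset.sum_sdiff hsub
    have hcard : ((S \ A).card : ℝ) + A.card = S.card := by
      exact_mod_cast Finset.card_sdiff_add_card_eq_card hsub
    have hS : S.Nonempty := hP.mono (Finset.sdiff_subset)
    rw [bmean, bmean, div_le_div_iff₀ (card_posR hA) (card_posR hS)]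
    rw [bmean, bmean, div_le_div_iff₀ (card_posR hA) (card_posR hP)] at hmm
    have e1 : (∑ i ∈ S, x i) * (A.card:ℝ) =
        (∑ i ∈ S \ A, x i) * A.card + (∑ i ∈ A, x i) * A.card := by rw [← hsum]; ring
    have e2 : (∑ i ∈ A, x i) * (S.card:ℝ) =
        (∑ i ∈ A, x i) * (S \ A).card + (∑ i ∈ A, x i) * A.card := by rw [← hcard]; ring
    linarith

lemma bbox_lb_le_ub (hb : 0 < b) {S : Finset (Fin n)} (hS : S.Nonempty) :
    bmean x S - S.card * b ≤ bmean x S + S.card * b := by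
  nlinarith [card_posR (S := S) hS]

lemma mem_bbox_ub (hb : 0 < b) {S : Finset (Fin n)} (hS : S.Nonempty) :
    bmean x S + S.card * b ∈ bbox b x S :=
  Set.mem_Icc.2 ⟨bbox_lb_le_ub hb hS, le_refl _⟩

lemma mem_bbox_lb (hb : 0 < b) {S : Finset (Fin n)} (hS : S.Nonempty) :
    bmean x S - S.card * b ∈ bbox b x S :=
  Set.mem_Icc.2 ⟨le_refl _, bbox_lb_le_ub hb hS⟩

lemma bbox_subset_iff (hb : 0 < b) {A S : Finset (Fin n)} (hA : A.Nonempty) :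
    bbox b x A ⊆ bbox b x S ↔
      bmean x S - S.card * b ≤ bmean x A - A.card * b ∧
      bmean x A + A.card * b ≤ bmean x S + S.card * b := by
  rw [bbox, bbox, Set.Icc_subset_Icc_iff (bbox_lb_le_ub hb hA)]

lemma Icc_subset_of_consec {S : Finset (Fin n)} (hc : Consec S) {a c : Fin n}
    (ha : a ∈ S) (hcm : c ∈ S) : Finset.Icc a c ⊆ S := fun t ht => by
  rw [Finset.mem_Icc] at ht; exact hc a ha c hcm t ht.1 ht.2

lemma Icc_split {a q p c : Fin n} (haq : a ≤ q) (hpc : p ≤ c) (hqp : q.val + 1 = p.val) :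
    Finset.Icc a c = Finset.Icc a q ∪ Finset.Icc p c := by
  ext t
  simp only [Finset.mem_union, Finset.mem_Icc, Fin.le_def]
  rw [Fin.le_def] at haq hpc
  omega

lemma Icc_disj {a q p c : Fin n} (hqp : q.val + 1 = p.val) :
    Disjoint (Finset.Icc a q) (Finset.Icc p c) := by
  rw [Finset.disjoint_left]
  intro t ht ht'
  simp only [Finset.mem_Icc, Fin.le_def] at ht ht'
  omega

lemma consec_union {S T : Finset (Fin n)} (hS : S.Nonempty) (hT : T.Nonempty)
    (hcS : Consec S) (hcT : Consec T)
    (hadj : (S.max' hS).val + 1 = (T.min' hT).val) : Consec (S ∪ T) := by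
  intro a ha c hc t hat htc
  rw [Finset.mem_union] at ha hc ⊢
  have hq : ∀ i ∈ S, i.val ≤ (S.max' hS).val := fun i hi => S.le_max' i hi
  have hp : ∀ i ∈ T, (T.min' hT).val ≤ i.val := fun i hi => T.min'_le i hi
  rw [Fin.le_def] at hat htc
  by_cases hts : t.val ≤ (S.max' hS).val
  · left
    rcases ha with ha | ha
    · exact hcS a ha (S.max' hS) (S.max'_mem hS) t hat (by rw [Fin.le_def]; exact hts)
    · exact absurd (hp a ha) (by have := hq _ (S.max'_mem hS); omega)
  · right
    have htp : (T.min' hT).val ≤ t.val := by omega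
    rcases hc with hc | hc
    · exact absurd (hq c hc) (by omega)
    · exact hcT (T.min' hT) (T.min'_mem hT) c hc t (by rw [Fin.le_def]; exact htp) htc

end BoxAux

section Merge
variable {n : ℕ} {b : ℝ} {x : Fin n → ℝ}

lemma wellCont_union (hb : 0 < b) (hx : Monotone x) {S T : Finset (Fin n)}
    (hS : S.Nonempty) (hT : T.Nonempty) (hcS : Consec S) (hcT : Consec T)
    (hwS : WellCont b x S) (hwT : WellCont b x T)
    (hadj : (S.max' hS).val + 1 = (T.min' hT).val)
    (hov : bmean x T - T.card * b ≤ bmean x S + S.card * b) :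
    WellCont b x (S ∪ T) := by
  set q := S.max' hS with hq
  set p := T.min' hT with hp
  have hqS : q ∈ S := S.max'_mem hS
  have hpT : p ∈ T := T.min'_mem hT
  have hdisj : Disjoint S T := by
    rw [Finset.disjoint_left]; intro i hiS hiT
    have h1 := S.le_max' i hiS
    have h2 := T.min'_le i hiT
    rw [Fin.le_def] at h1 h2; omega
  have hcardU : (((S ∪ T).card : ℝ)) = (S.card:ℝ) + T.card := by
    rw [Finset.card_union_of_disjoint hdisj]; push_cast; ring
  have hSTne : (S ∪ T).Nonempty := hS.mono Finset.subset_union_left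
  have hU : bmean x (S ∪ T) * ((S.card:ℝ) + T.card) =
      S.card * bmean x S + T.card * bmean x T := by
    have h0 := bmean_card (x := x) hSTne
    rw [hcardU] at h0
    rw [h0, mul_comm ((S.card:ℝ)), mul_comm ((T.card:ℝ)), bmean_card hS, bmean_card hT]
    exact Finset.sum_union hdisj
  have hpair : ∀ i ∈ S, ∀ j ∈ T, x i ≤ x j := by
    intro i hi j hj
    apply hx
    have h1 := S.le_max' i hi
    have h2 := T.min'_le j hj
    rw [Fin.le_def] at h1 h2 ⊢; omega
  have hmST : bmean x S ≤ bmean x T := bmean_le_bmean hS hT hpair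
  have hbS : bbox b x S ⊆ bbox b x (S ∪ T) := by
    rw [bbox_subset_iff hb hS, hcardU]
    constructor
    · nlinarith [card_posR hS, card_posR hT]
    · nlinarith [card_posR hS, card_posR hT]
  have hbT : bbox b x T ⊆ bbox b x (S ∪ T) := by
    rw [bbox_subset_iff hb hT, hcardU]
    constructor
    · nlinarith [card_posR hS, card_posR hT]
    · nlinarith [card_posR hS, card_posR hT]
  intro a ha c hc hac
  rw [Finset.mem_union] at ha hc
  rcases ha with haS | haT
  · rcases hc with hcS' | hcT'
    · exact (hwS a haS c hcS' hac).trans hbS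
    · -- straddling case
      have haq : a ≤ q := S.le_max' a haS
      have hpc : p ≤ c := T.min'_le c hcT'
      have hIAne : (Finset.Icc a q).Nonempty := Finset.nonempty_Icc.2 haq
      have hIBne : (Finset.Icc p c).Nonempty := Finset.nonempty_Icc.2 hpc
      have hsplit : Finset.Icc a c = Finset.Icc a q ∪ Finset.Icc p c := Icc_split haq hpc hadj
      have hdisjI : Disjoint (Finset.Icc a q) (Finset.Icc p c) := Icc_disj hadj
      have hIcane : (Finset.Icc a c).Nonempty := Finset.nonempty_Icc.2 hac
      have hcardI : (((Finset.Icc a c).card : ℝ)) =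
          ((Finset.Icc a q).card:ℝ) + ((Finset.Icc p c).card:ℝ) := by
        rw [hsplit, Finset.card_union_of_disjoint hdisjI]; push_cast; ring
      have hI : bmean x (Finset.Icc a c) * (((Finset.Icc a q).card:ℝ) + (Finset.Icc p c).card) =
          ((Finset.Icc a q).card:ℝ) * bmean x (Finset.Icc a q)
            + ((Finset.Icc p c).card:ℝ) * bmean x (Finset.Icc p c) := by
        have h0 := bmean_card (x := x) hIcane
        rw [hcardI] at h0
        rw [h0, mul_comm (((Finset.Icc a q).card:ℝ)), mul_comm (((Finset.Icc p c).card:ℝ)),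
          bmean_card hIAne, bmean_card hIBne, hsplit]
        exact Finset.sum_union hdisjI
      have hA := (bbox_subset_iff hb hIAne).1 (hwS a haS q hqS haq)
      have hB := (bbox_subset_iff hb hIBne).1 (hwT p hpT c hcT' hpc)
      have hsubIA : Finset.Icc a q ⊆ S := Icc_subset_of_consec hcS haS hqS
      have hsubIB : Finset.Icc p c ⊆ T := Icc_subset_of_consec hcT hpT hcT'
      have hcardA : ((Finset.Icc a q).card:ℝ) ≤ S.card := by
        exact_mod_cast Finset.card_le_card hsubIA
      have hcardB : ((Finset.Icc p c).card:ℝ) ≤ T.card := by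
        exact_mod_cast Finset.card_le_card hsubIB
      have hIAIB : bmean x (Finset.Icc a q) ≤ bmean x (Finset.Icc p c) := by
        apply bmean_le_bmean hIAne hIBne
        intro i hi j hj
        rw [Finset.mem_Icc] at hi hj
        apply hx
        have h1 := hi.2; have h2 := hj.1
        rw [Fin.le_def] at h1 h2 ⊢; omega
      rw [bbox_subset_iff hb hIcane, hcardU, hcardI]
      constructor
      · exact lower_merge b (bmean x S) (bmean x T) (bmean x (Finset.Icc a q))
          (bmean x (Finset.Icc p c)) (bmean x (Finset.Icc a c)) (bmean x (S ∪ T))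
          _ _ _ _ hb (card_posR hIAne) (card_posR hIBne) hcardA hcardB hI hU
          hA.1 hB.1 hov hIAIB
      · exact upper_merge b (bmean x S) (bmean x T) (bmean x (Finset.Icc a q))
          (bmean x (Finset.Icc p c)) (bmean x (Finset.Icc a c)) (bmean x (S ∪ T))
          _ _ _ _ hb (card_posR hIAne) (card_posR hIBne) hcardA hcardB hI hU
          hA.2 hB.2 hov hIAIB
  · rcases hc with hcS' | hcT'
    · exfalso
      have h1 := T.min'_le a haT
      have h2 := S.le_max' c hcS'
      rw [Fin.le_def] at h1 h2 hac; omega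
    · exact (hwT a haT c hcT' hac).trans hbT

end Merge

section Exist
variable {n : ℕ} {b : ℝ} {x : Fin n → ℝ}

def PreD (b : ℝ) (x : Fin n → ℝ) (D : Finset (Finset (Fin n))) : Prop :=
  (∀ S ∈ D, S.Nonempty) ∧ (∀ a : Fin n, ∃! S : Finset (Fin n), S ∈ D ∧ a ∈ S) ∧
  (∀ S ∈ D, Consec S) ∧ (∀ S ∈ D, WellCont b x S)

/-- separation of adjacent blocks -/
def BSep (b : ℝ) (x : Fin n → ℝ) (D : Finset (Finset (Fin n))) : Prop :=
  ∀ S ∈ D, ∀ T ∈ D, ∀ (hSne : S.Nonempty) (hTne : T.Nonempty),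
    (S.max' hSne).val + 1 = (T.min' hTne).val →
    bmean x S + S.card * b < bmean x T - T.card * b

lemma chain (hb : 0 < b) {D : Finset (Finset (Fin n))} (hpre : PreD b x D)
    (hsep : BSep b x D) :
    ∀ N : ℕ, ∀ j : Fin n, j.val ≤ N → ∀ i : Fin n, i ≤ j → ∀ S ∈ D, ∀ T ∈ D,
      i ∈ S → j ∈ T → S ≠ T →
      bmean x S + S.card * b < bmean x T - T.card * b := by
  obtain ⟨hne, hpart, hcons, -⟩ := hpre
  intro N
  induction N with
  | zero =>
    intro j hj i hij S hS T hT hiS hjT hST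
    have : i = j := by rw [Fin.le_def] at hij; exact Fin.ext (by omega)
    subst this
    exact absurd (ExistsUnique.unique (hpart i) ⟨hS, hiS⟩ ⟨hT, hjT⟩) hST
  | succ N IH =>
    intro j hj i hij S hS T hT hiS hjT hST
    have hTne : T.Nonempty := hne T hT
    set p := T.min' hTne with hpdef
    have hpT : p ∈ T := T.min'_mem hTne
    have hpj : p ≤ j := T.min'_le j hjT
    have hip : i.val < p.val := by
      by_contra hcon
      push_neg at hcon
      have hiT : i ∈ T := hcons T hT p hpT j hjT i (by rw [Fin.le_def]; omega) hij
      exact hST (ExistsUnique.unique (hpart i) ⟨hS, hiS⟩ ⟨hT, hiT⟩)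
    have hpn : p.val - 1 < n := by omega
    set c' : Fin n := ⟨p.val - 1, by omega⟩ with hc'def
    obtain ⟨T', ⟨hT'D, hc'T'⟩, -⟩ := hpart c'
    have hT'ne : T'.Nonempty := hne T' hT'D
    have hT'T : T' ≠ T := by
      intro h
      subst h
      have := T'.min'_le c' hc'T'
      rw [Fin.le_def] at this
      simp only [hc'def] at this
      omega
    have hmax' : (T'.max' hT'ne).val + 1 = p.val := by
      have h1 : c'.val ≤ (T'.max' hT'ne).val := by
        have := T'.le_max' c' hc'T'
        rwa [Fin.le_def] at this
      have h2 : (T'.max' hT'ne).val < p.val := by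
        by_contra hcon
        push_neg at hcon
        have hpT' : p ∈ T' := hcons T' hT'D c' hc'T' (T'.max' hT'ne) (T'.max'_mem hT'ne) p
          (by rw [Fin.le_def]; simp only [hc'def]; omega) (by rw [Fin.le_def]; omega)
        exact hT'T (ExistsUnique.unique (hpart p) ⟨hT'D, hpT'⟩ ⟨hT, hpT⟩)
      simp only [hc'def] at h1
      omega
    have hstep := hsep T' hT'D T hT hT'ne hTne hmax'
    by_cases hST' : S = T'
    · subst hST'
      exact hstep
    · have hic' : i ≤ c' := by rw [Fin.le_def]; simp only [hc'def]; omega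
      have hc'N : c'.val ≤ N := by
        simp only [hc'def]
        rw [Fin.le_def] at hpj
        omega
      have h1 := IH c' hc'N i hic' S hS T' hT'D hiS hc'T' hST'
      have h2 := bbox_lb_le_ub (x := x) hb hT'ne
      linarith

lemma isBoxDecomp_of_sep (hb : 0 < b) {D : Finset (Finset (Fin n))}
    (hpre : PreD b x D) (hsep : BSep b x D) : IsBoxDecomp b x D := by
  obtain ⟨hne, hpart, hcons, hwc⟩ := hpre
  have key : ∀ S ∈ D, ∀ T ∈ D, S ≠ T → (∀ i ∈ S, ∀ j ∈ T, i < j) →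
      bmean x S + S.card * b < bmean x T - T.card * b := by
    intro S hS T hT hST hord
    have hSne := hne S hS
    have hTne := hne T hT
    have hij : S.max' hSne < T.min' hTne := hord _ (S.max'_mem hSne) _ (T.min'_mem hTne)
    exact chain hb ⟨hne, hpart, hcons, hwc⟩ hsep (T.min' hTne).val (T.min' hTne) le_rfl
      (S.max' hSne) hij.le S hS T hT (S.max'_mem hSne) (T.min'_mem hTne) hST
  have tricho : ∀ S ∈ D, ∀ T ∈ D, S ≠ T →
      (∀ i ∈ S, ∀ j ∈ T, i < j) ∨ (∀ i ∈ T, ∀ j ∈ S, i < j) := by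
    intro S hS T hT hST
    have hSne := hne S hS
    have hTne := hne T hT
    by_cases h1 : (S.max' hSne).val < (T.min' hTne).val
    · left
      intro i hi j hj
      have := S.le_max' i hi
      have := T.min'_le j hj
      rw [Fin.le_def] at *
      rw [Fin.lt_def]
      omega
    · by_cases h2 : (T.max' hTne).val < (S.min' hSne).val
      · right
        intro i hi j hj
        have := T.le_max' i hi
        have := S.min'_le j hj
        rw [Fin.le_def] at *
        rw [Fin.lt_def]
        omega
      · exfalso
        push_neg at h1 h2
        -- the intervals intersect, contradiction
        by_cases h3 : (S.min' hSne).val ≤ (T.min' hTne).val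
        · have hmem : T.min' hTne ∈ S := by
            apply hcons S hS (S.min' hSne) (S.min'_mem hSne) (S.max' hSne) (S.max'_mem hSne)
            · rw [Fin.le_def]; omega
            · rw [Fin.le_def]; omega
          exact hST (ExistsUnique.unique (hpart (T.min' hTne)) ⟨hS, hmem⟩ ⟨hT, T.min'_mem hTne⟩)
        · push_neg at h3
          have hmem : S.min' hSne ∈ T := by
            apply hcons T hT (T.min' hTne) (T.min'_mem hTne) (T.max' hTne) (T.max'_mem hTne)
            · rw [Fin.le_def]; omega
            · rw [Fin.le_def]; omega
          exact hST (ExistsUnique.unique (hpart (S.min' hSne)) ⟨hS, S.min'_mem hSne⟩ ⟨hT, hmem⟩)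
  refine ⟨hne, hpart, hcons, hwc, ?_, ?_⟩
  · intro S hS T hT hST
    rw [Set.eq_empty_iff_forall_notMem]
    rintro u ⟨hu1, hu2⟩
    rw [bbox, Set.mem_Icc] at hu1 hu2
    rcases tricho S hS T hT hST with h | h
    · have := key S hS T hT hST h
      linarith
    · have := key T hT S hS (Ne.symm hST) h
      linarith
  · intro S hS T hT hord u hu v hv
    have hSne := hne S hS
    have hTne := hne T hT
    have hST : S ≠ T := by
      intro h
      subst h
      obtain ⟨i, hi⟩ := hSne
      exact lt_irrefl i (hord i hi i hi)
    have := key S hS T hT hST hord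
    rw [bbox, Set.mem_Icc] at hu hv
    linarith

lemma preD_merge (hb : 0 < b) (hx : Monotone x) {D : Finset (Finset (Fin n))}
    (hpre : PreD b x D) {S T : Finset (Fin n)} (hS : S ∈ D) (hT : T ∈ D)
    (hSne : S.Nonempty) (hTne : T.Nonempty)
    (hadj : (S.max' hSne).val + 1 = (T.min' hTne).val)
    (hov : bmean x T - T.card * b ≤ bmean x S + S.card * b) :
    PreD b x (insert (S ∪ T) ((D.erase S).erase T)) ∧
      (insert (S ∪ T) ((D.erase S).erase T)).card < D.card := by
  obtain ⟨hne, hpart, hcons, hwc⟩ := hpre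
  have hST : S ≠ T := by
    intro h
    subst h
    have := S.min'_le (S.max' hSne) (S.max'_mem hSne)
    rw [Fin.le_def] at this
    omega
  have hmem : ∀ U, U ∈ insert (S ∪ T) ((D.erase S).erase T) ↔
      U = S ∪ T ∨ (U ∈ D ∧ U ≠ S ∧ U ≠ T) := by
    intro U
    simp only [Finset.mem_insert, Finset.mem_erase]
    tauto
  constructor
  · refine ⟨?_, ?_, ?_, ?_⟩
    · intro U hU
      rw [hmem] at hU
      rcases hU with h | h
      · subst h; exact hSne.mono Finset.subset_union_left
      · exact hne U h.1
    · intro a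
      obtain ⟨W, ⟨hWD, haW⟩, hWuniq⟩ := hpart a
      by_cases hWS : W = S ∨ W = T
      · refine ⟨S ∪ T, ⟨(hmem _).2 (Or.inl rfl), ?_⟩, ?_⟩
        · rw [Finset.mem_union]
          rcases hWS with h | h
          · left; rw [← h]; exact haW
          · right; rw [← h]; exact haW
        · rintro U ⟨hU, haU⟩
          rw [hmem] at hU
          rcases hU with h | ⟨hUD, hUS, hUT⟩
          · exact h
          · exfalso
            have := hWuniq U ⟨hUD, haU⟩
            subst this
            tauto
      · push_neg at hWS
        refine ⟨W, ⟨(hmem _).2 (Or.inr ⟨hWD, hWS.1, hWS.2⟩), haW⟩, ?_⟩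
        rintro U ⟨hU, haU⟩
        rw [hmem] at hU
        rcases hU with h | ⟨hUD, hUS, hUT⟩
        · exfalso
          subst h
          rw [Finset.mem_union] at haU
          rcases haU with h | h
          · exact hWS.1 (hWuniq S ⟨hS, h⟩).symm
          · exact hWS.2 (hWuniq T ⟨hT, h⟩).symm
        · exact hWuniq U ⟨hUD, haU⟩
    · intro U hU
      rw [hmem] at hU
      rcases hU with h | h
      · subst h
        exact consec_union hSne hTne (hcons S hS) (hcons T hT) hadj
      · exact hcons U h.1
    · intro U hU
      rw [hmem] at hU
      rcases hU with h | h
      · subst h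
        exact wellCont_union hb hx hSne hTne (hcons S hS) (hcons T hT)
          (hwc S hS) (hwc T hT) hadj hov
      · exact hwc U h.1
  · have hTe : T ∈ D.erase S := Finset.mem_erase.2 ⟨hST.symm, hT⟩
    have h2 : 2 ≤ D.card := Finset.one_lt_card.2 ⟨S, hS, T, hT, hST⟩
    calc (insert (S ∪ T) ((D.erase S).erase T)).card
        ≤ ((D.erase S).erase T).card + 1 := Finset.card_insert_le _ _
    _ = (D.erase S).card - 1 + 1 := by rw [Finset.card_erase_of_mem hTe]
    _ = (D.card - 1) - 1 + 1 := by rw [Finset.card_erase_of_mem hS]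
    _ < D.card := by omega

lemma preD_singletons : PreD b x (Finset.univ.image fun i : Fin n => ({i} : Finset (Fin n))) := by
  refine ⟨?_, ?_, ?_, ?_⟩
  · intro U hU
    rw [Finset.mem_image] at hU
    obtain ⟨i, -, rfl⟩ := hU
    exact Finset.singleton_nonempty i
  · intro a
    refine ⟨{a}, ⟨Finset.mem_image.2 ⟨a, Finset.mem_univ a, rfl⟩, Finset.mem_singleton_self a⟩, ?_⟩
    rintro U ⟨hU, haU⟩
    rw [Finset.mem_image] at hU
    obtain ⟨i, -, rfl⟩ := hU
    rw [Finset.mem_singleton] at haU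
    rw [haU]
  · intro U hU
    rw [Finset.mem_image] at hU
    obtain ⟨i, -, rfl⟩ := hU
    intro a ha c hc t hat htc
    rw [Finset.mem_singleton] at ha hc ⊢
    subst ha; subst hc
    exact le_antisymm htc hat
  · intro U hU
    rw [Finset.mem_image] at hU
    obtain ⟨i, -, rfl⟩ := hU
    intro a ha c hc hac
    rw [Finset.mem_singleton] at ha hc
    subst ha; subst hc
    rw [Finset.Icc_self]

lemma exists_boxDecomp (hb : 0 < b) (hx : Monotone x) :
    ∃ D : Finset (Finset (Fin n)), IsBoxDecomp b x D := by
  suffices h : ∀ k : ℕ, ∀ D : Finset (Finset (Fin n)), D.card ≤ k → PreD b x D →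
      ∃ D' : Finset (Finset (Fin n)), IsBoxDecomp b x D' by
    exact h _ _ le_rfl (preD_singletons)
  intro k
  induction k with
  | zero =>
    intro D hcard hpre
    refine ⟨D, isBoxDecomp_of_sep hb hpre ?_⟩
    intro U hU
    rw [Finset.card_eq_zero.1 (Nat.le_zero.1 hcard)] at hU
    exact absurd hU (Finset.notMem_empty U)
  | succ k IH =>
    intro D hcard hpre
    by_cases hex : ∃ S, S ∈ D ∧ ∃ T, T ∈ D ∧ ∃ (hSne : S.Nonempty) (hTne : T.Nonempty),
        (S.max' hSne).val + 1 = (T.min' hTne).val ∧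
        bmean x T - T.card * b ≤ bmean x S + S.card * b
    · obtain ⟨S, hS, T, hT, hSne, hTne, hadj, hov⟩ := hex
      obtain ⟨hpre', hlt⟩ := preD_merge hb hx hpre hS hT hSne hTne hadj hov
      exact IH _ (by omega) hpre'
    · push_neg at hex
      refine ⟨D, isBoxDecomp_of_sep hb hpre ?_⟩
      intro S hS T hT hSne hTne hadj
      have := hex S hS T hT hSne hTne hadj
      linarith

section Unique
variable {n : ℕ} {b : ℝ} {x : Fin n → ℝ}

lemma Qlem (hb : 0 < b) {D : Finset (Finset (Fin n))} (hD : IsBoxDecomp b x D) :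
    ∀ N : ℕ, ∀ c : Fin n, c.val ≤ N → ∀ a : Fin n, a ≤ c →
    ∀ S, ∀ hS : S ∈ D, ∀ T, ∀ hT : T ∈ D, a ∈ S → c ∈ T →
    ((bmean x (Finset.Icc a (min c (S.max' (hD.1 S hS))))
        - (Finset.Icc a (min c (S.max' (hD.1 S hS)))).card * b)
      + 2 * (Finset.Icc a c).card * b
    ≤ bmean x (Finset.Icc (max a (T.min' (hD.1 T hT))) c)
        + (Finset.Icc (max a (T.min' (hD.1 T hT))) c).card * b) ∧
    (S ≠ T →
      (bmean x (Finset.Icc a (min c (S.max' (hD.1 S hS))))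
          - (Finset.Icc a (min c (S.max' (hD.1 S hS)))).card * b)
        + 2 * (Finset.Icc a c).card * b
      < bmean x (Finset.Icc (max a (T.min' (hD.1 T hT))) c)
          + (Finset.Icc (max a (T.min' (hD.1 T hT))) c).card * b) := by
  obtain ⟨hne, hpart, hcons, hwcont, hdisj, hord⟩ := hD
  -- helper for the S = T case
  have heqcase : ∀ (a c : Fin n), a ≤ c → ∀ S : Finset (Fin n), ∀ hSne : S.Nonempty,
      a ∈ S → c ∈ S →
      (bmean x (Finset.Icc a (min c (S.max' hSne)))
          - (Finset.Icc a (min c (S.max' hSne))).card * b)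
        + 2 * (Finset.Icc a c).card * b
      = bmean x (Finset.Icc (max a (S.min' hSne)) c)
          + (Finset.Icc (max a (S.min' hSne)) c).card * b := by
    intro a c hac S hSne haS hcS
    have h1 : min c (S.max' hSne) = c := min_eq_left (S.le_max' c hcS)
    have h2 : max a (S.min' hSne) = a := max_eq_left (S.min'_le a haS)
    rw [h1, h2]
    ring
  intro N
  induction N with
  | zero =>
    intro c hc a hac S hS T hT haS hcT
    have hacq : a = c := by
      rw [Fin.le_def] at hac
      exact Fin.ext (by omega)
    subst hacq
    have hSTeq : S = T := ExistsUnique.unique (hpart a) ⟨hS, haS⟩ ⟨hT, hcT⟩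
    subst hSTeq
    refine ⟨le_of_eq (heqcase a a le_rfl S (hne S hS) haS hcT), fun h => absurd rfl h⟩
  | succ N IH =>
    intro c hc a hac S hS T hT haS hcT
    by_cases hST : S = T
    · subst hST
      refine ⟨le_of_eq (heqcase a c hac S (hne S hS) haS hcT), fun h => absurd rfl h⟩
    · -- main step
      have hSne := hne S hS
      have hTne := hne T hT
      set p := T.min' hTne with hpdef
      have hpT : p ∈ T := T.min'_mem hTne
      have hpc : p ≤ c := T.min'_le c hcT
      have hap : a.val < p.val := by
        by_contra hcon
        push_neg at hcon
        have haT : a ∈ T := hcons T hT p hpT c hcT a (by rw [Fin.le_def]; omega) hac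
        exact hST (ExistsUnique.unique (hpart a) ⟨hS, haS⟩ ⟨hT, haT⟩)
      set q := S.max' hSne with hqdef
      have hqS : q ∈ S := S.max'_mem hSne
      have haq : a ≤ q := S.le_max' a haS
      have hqp : q.val < p.val := by
        by_contra hcon
        push_neg at hcon
        have hpS : p ∈ S := hcons S hS a haS q hqS p (by rw [Fin.le_def]; omega) (by rw [Fin.le_def]; omega)
        exact hST (ExistsUnique.unique (hpart p) ⟨hS, hpS⟩ ⟨hT, hpT⟩)
      have hqc : q ≤ c := by rw [Fin.le_def]; rw [Fin.le_def] at hpc; omega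
      have hminq : min c q = q := min_eq_right hqc
      set c' : Fin n := ⟨p.val - 1, by omega⟩ with hc'def
      have hc'val : c'.val = p.val - 1 := rfl
      have hac' : a ≤ c' := by rw [Fin.le_def]; omega
      have hqc' : q.val ≤ c'.val := by omega
      obtain ⟨T', ⟨hT'D, hc'T'⟩, -⟩ := hpart c'
      have hT'ne := hne T' hT'D
      have hT'T : T' ≠ T := by
        intro h
        subst h
        have h2 : p ≤ c' := T'.min'_le c' hc'T'
        rw [Fin.le_def] at h2
        omega
      have hmaxT' : ∀ u ∈ T', u.val ≤ c'.val := by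
        intro u hu
        by_contra hcon
        push_neg at hcon
        have hpT'' : p ∈ T' := hcons T' hT'D c' hc'T' u hu p
          (by rw [Fin.le_def]; omega) (by rw [Fin.le_def]; omega)
        exact hT'T (ExistsUnique.unique (hpart p) ⟨hT'D, hpT''⟩ ⟨hT, hpT⟩)
      have hminq' : min c' q = q := min_eq_right (by rw [Fin.le_def]; exact hqc')
      have hc'N : c'.val ≤ N := by
        rw [Fin.le_def] at hpc
        omega
      have hIH := (IH c' hc'N a hac' S hS T' hT'D haS hc'T').1
      rw [hminq'] at hIH
      -- the last piece B = Icc p c and the previous piece B' = Icc (max a minT') c'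
      set p' := max a (T'.min' hT'ne) with hp'def
      have hp'c' : p' ≤ c' := max_le hac' (T'.min'_le c' hc'T')
      have hB'ne : (Finset.Icc p' c').Nonempty := Finset.nonempty_Icc.2 hp'c'
      have hBne : (Finset.Icc p c).Nonempty := Finset.nonempty_Icc.2 hpc
      have hB'subT' : Finset.Icc p' c' ⊆ T' := by
        intro t ht
        rw [Finset.mem_Icc] at ht
        exact hcons T' hT'D (T'.min' hT'ne) (T'.min'_mem hT'ne) c' hc'T' t
          ((le_max_right a _).trans ht.1) ht.2
      have hp'T' : p' ∈ T' := hB'subT' (Finset.mem_Icc.2 ⟨le_rfl, hp'c'⟩)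
      have hboxB' : bbox b x (Finset.Icc p' c') ⊆ bbox b x T' :=
        hwcont T' hT'D p' hp'T' c' hc'T' hp'c'
      have hboxB : bbox b x (Finset.Icc p c) ⊆ bbox b x T :=
        hwcont T hT p hpT c hcT hpc
      -- ordering of the two boxes
      have hordT : ∀ u ∈ bbox b x T', ∀ v ∈ bbox b x T, u < v := by
        apply hord T' hT'D T hT
        intro u hu v hv
        have h1 := hmaxT' u hu
        have h2 := T.min'_le v hv
        rw [Fin.le_def] at h2
        rw [Fin.lt_def]
        omega
      have hkey : bmean x (Finset.Icc p' c') + (Finset.Icc p' c').card * b <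
          bmean x (Finset.Icc p c) - (Finset.Icc p c).card * b := by
        exact hordT _ (hboxB' (mem_bbox_ub hb hB'ne)) _ (hboxB (mem_bbox_lb hb hBne))
      -- card split
      have hsplit : Finset.Icc a c = Finset.Icc a c' ∪ Finset.Icc p c :=
        Icc_split hac' hpc (by omega)
      have hdisjI : Disjoint (Finset.Icc a c') (Finset.Icc p c) :=
        Icc_disj (n := n) (by omega)
      have hcards : ((Finset.Icc a c).card : ℝ) =
          ((Finset.Icc a c').card : ℝ) + ((Finset.Icc p c).card : ℝ) := by
        rw [hsplit, Finset.card_union_of_disjoint hdisjI]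
        push_cast; ring
      have hmaxp : max a p = p := max_eq_right (by rw [Fin.le_def]; omega)
      rw [hminq, hmaxp]
      constructor
      · rw [hcards]; linarith
      · intro _; rw [hcards]; linarith

end Unique

lemma same_block (hb : 0 < b) {D : Finset (Finset (Fin n))} (hD : IsBoxDecomp b x D)
    {a c : Fin n} (hac : a ≤ c)
    (hwc : ∀ p q : Fin n, a ≤ p → p ≤ q → q ≤ c →
      bbox b x (Finset.Icc p q) ⊆ bbox b x (Finset.Icc a c))
    {S T : Finset (Fin n)} (hS : S ∈ D) (hT : T ∈ D) (haS : a ∈ S) (hcT : c ∈ T) :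
    S = T := by
  by_contra hST
  have hQ := (Qlem hb hD c.val c le_rfl a hac S hS T hT haS hcT).2 hST
  set qm := min c (S.max' (hD.1 S hS)) with hqm
  set pm := max a (T.min' (hD.1 T hT)) with hpm
  have haqm : a ≤ qm := le_min hac (S.le_max' a haS)
  have hqmc : qm ≤ c := min_le_left _ _
  have hapm : a ≤ pm := le_max_left _ _
  have hpmc : pm ≤ c := max_le hac (T.min'_le c hcT)
  have hAne : (Finset.Icc a qm).Nonempty := Finset.nonempty_Icc.2 haqm
  have hBne : (Finset.Icc pm c).Nonempty := Finset.nonempty_Icc.2 hpmc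
  have hIne : (Finset.Icc a c).Nonempty := Finset.nonempty_Icc.2 hac
  have hA := (bbox_subset_iff hb hAne).1 (hwc a qm le_rfl haqm hqmc)
  have hB := (bbox_subset_iff hb hBne).1 (hwc pm c hapm hpmc le_rfl)
  linarith [hA.1, hB.2]

lemma decomp_subset (hb : 0 < b) {D D' : Finset (Finset (Fin n))}
    (hD : IsBoxDecomp b x D) (hD' : IsBoxDecomp b x D') : D' ⊆ D := by
  intro T hT
  have hTne := hD'.1 T hT
  set a := T.min' hTne with hadef
  set c := T.max' hTne with hcdef
  have haT : a ∈ T := T.min'_mem hTne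
  have hcT : c ∈ T := T.max'_mem hTne
  have hac : a ≤ c := T.min'_le c hcT
  have hTIcc : T = Finset.Icc a c := by
    apply Finset.Subset.antisymm
    · intro t ht
      rw [Finset.mem_Icc]
      exact ⟨T.min'_le t ht, T.le_max' t ht⟩
    · exact Icc_subset_of_consec (hD'.2.2.1 T hT) haT hcT
  obtain ⟨S, ⟨hSD, haS⟩, -⟩ := hD.2.1 a
  obtain ⟨S', ⟨hS'D, hcS'⟩, -⟩ := hD.2.1 c
  have hwc : ∀ p q : Fin n, a ≤ p → p ≤ q → q ≤ c →
      bbox b x (Finset.Icc p q) ⊆ bbox b x (Finset.Icc a c) := by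
    intro p q h1 h2 h3
    have hpT : p ∈ T := hD'.2.2.1 T hT a haT c hcT p h1 (h2.trans h3)
    have hqT : q ∈ T := hD'.2.2.1 T hT a haT c hcT q (h1.trans h2) h3
    have := hD'.2.2.2.1 T hT p hpT q hqT h2
    rwa [hTIcc] at this
  have hSS' : S = S' := same_block hb hD hac hwc hSD hS'D haS hcS'
  have hTsubS : T ⊆ S := by
    rw [hTIcc]
    exact Icc_subset_of_consec (hD.2.2.1 S hSD) haS (hSS' ▸ hcS')
  -- reverse inclusion
  have hSne := hD.1 S hSD
  set a' := S.min' hSne with ha'def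
  set c' := S.max' hSne with hc'def
  have ha'S : a' ∈ S := S.min'_mem hSne
  have hc'S : c' ∈ S := S.max'_mem hSne
  have ha'c' : a' ≤ c' := S.min'_le c' hc'S
  have hSIcc : S = Finset.Icc a' c' := by
    apply Finset.Subset.antisymm
    · intro t ht
      rw [Finset.mem_Icc]
      exact ⟨S.min'_le t ht, S.le_max' t ht⟩
    · exact Icc_subset_of_consec (hD.2.2.1 S hSD) ha'S hc'S
  obtain ⟨W, ⟨hWD', ha'W⟩, -⟩ := hD'.2.1 a'
  obtain ⟨W', ⟨hW'D', hc'W'⟩, -⟩ := hD'.2.1 c'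
  have hwc' : ∀ p q : Fin n, a' ≤ p → p ≤ q → q ≤ c' →
      bbox b x (Finset.Icc p q) ⊆ bbox b x (Finset.Icc a' c') := by
    intro p q h1 h2 h3
    have hpS : p ∈ S := hD.2.2.1 S hSD a' ha'S c' hc'S p h1 (h2.trans h3)
    have hqS : q ∈ S := hD.2.2.1 S hSD a' ha'S c' hc'S q (h1.trans h2) h3
    have := hD.2.2.2.1 S hSD p hpS q hqS h2
    rwa [hSIcc] at this
  have hWW' : W = W' := same_block hb hD' ha'c' hwc' hWD' hW'D' ha'W hc'W'
  have hSsubW : S ⊆ W := by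
    rw [hSIcc]
    exact Icc_subset_of_consec (hD'.2.2.1 W hWD') ha'W (hWW' ▸ hc'W')
  have haW : a ∈ W := hSsubW haS
  obtain ⟨W0, -, huniq⟩ := hD'.2.1 a
  have hTW : T = W := (huniq T ⟨hT, haT⟩).trans (huniq W ⟨hWD', haW⟩).symm
  have : T = S := Finset.Subset.antisymm hTsubS (hTW ▸ hSsubW)
  rw [this]
  exact hSD

/-- Every finite multiset of points in `ℝ` (sorted as a monotone tuple) has a unique box
decomposition. -/
theorem box_decomposition_exists_unique {n : ℕ} (b : ℝ) (hb : 0 < b)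
    (x : Fin n → ℝ) (hx : Monotone x) :
    ∃! D : Finset (Finset (Fin n)), IsBoxDecomp b x D := by
  obtain ⟨D, hD⟩ := exists_boxDecomp hb hx
  refine ⟨D, hD, ?_⟩
  intro D' hD'
  exact Finset.Subset.antisymm (decomp_subset hb hD hD') (decomp_subset hb hD' hD)
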